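/- For all y', y'' ∈ ℝ² with y' ≠ y'' and all T ∈ (0,∞), ∫₀^T Q_{2r}(y',y'') dr = ∫₀^∞ (e^{−1/(4v)} − 1_{[1,∞)}(v))/(4πv) dv − (1/(2π)) ln|y'−y''| + (ln T)/(4π) + ε₁(y',y'';T) + ε₂(y',y'';T) + ε₃(y',y'';T), where ε₁(y',y'';T) := −∫_{T/|y'−y''|²}^∞ (e^{−1/(4v)} − 1_{[1,∞)}(v))/(4πv) dv, ε₂(y',y'';T) := −1_{(0,1)}(T/|y'−y''|²)·(ln T)/(4π), and ε₃(y',y'';T) := 1_{(0,1)}(T/|y'−y''|²)·(ln|y'−y''|)/(2π). Moreover, for each j ∈ {1,2,3}, all x, y ∈ ℝ², and all 0 < s ≤ t < ∞, lim_{T→∞} ∫_{ℝ²}∫_{ℝ²} Q_{1/s}(y',x)·|ε_j(y',y'';T)|·Q_{1/t}(y'',y) dy' dy'' = 0. -/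

import Mathlib

open MeasureTheory Filter Set

noncomputable section

/-- Binomial probability mass at integer index `j`, parameters `(m, p)`:
`C(m,j) p^j (1-p)^(m-j)`, interpreted as `0` unless `0 ≤ j ≤ m`. -/
def binPMF (m : ℕ) (p : ℝ) (j : ℤ) : ℝ :=
  if 0 ≤ j then (m.choose j.toNat : ℝ) * p ^ j.toNat * (1 - p) ^ (m - j.toNat) else 0

/-- `P(S_m(p) = S'_{m'}(p') + n)` for independent binomial random variables
`S_m(p)` and `S'_{m'}(p')`. -/
def PSS (m m' : ℕ) (p p' : ℝ) (n : ℤ) : ℝ :=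
  ∑ k ∈ Finset.range (m' + 1), binPMF m' p' (k : ℤ) * binPMF m p ((k : ℤ) + n)

/-- Poisson probability mass function with mean `l`. -/
def poisPMF (l : ℝ) (k : ℕ) : ℝ := Real.exp (-l) * l ^ k / (Nat.factorial k)

/-- `P(V(l) = V'(l') + n)` for independent Poisson random variables with
means `l` and `l'`. -/
def PVV (l l' : ℝ) (n : ℤ) : ℝ :=
  ∑' k : ℕ, if 0 ≤ (k : ℤ) + n then poisPMF l' k * poisPMF l ((k : ℤ) + n).toNat else 0

/-- Centered Gaussian density with variance `v`, evaluated at `x`. -/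
def gaussD (v x : ℝ) : ℝ := (Real.sqrt (2 * Real.pi * v))⁻¹ * Real.exp (-x ^ 2 / (2 * v))

/-- Euclidean distance of two points of `ℝ × ℝ` (viewed as `ℝ²`). -/
def enorm2 (a b : ℝ × ℝ) : ℝ := Real.sqrt ((a.1 - b.1) ^ 2 + (a.2 - b.2) ^ 2)

/-- Two-dimensional heat kernel `Q_t(a,b)`. -/
def heatK (t : ℝ) (a b : ℝ × ℝ) : ℝ :=
  (2 * Real.pi * t)⁻¹ * Real.exp (-((a.1 - b.1) ^ 2 + (a.2 - b.2) ^ 2) / (2 * t))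

/-- `M_N(u,r) = ⌊N r + N r · u / N^{1/2}⌋`. -/
def Mfl (N : ℕ) (u r : ℝ) : ℤ := ⌊(N : ℝ) * r + (N : ℝ) * r * (u / Real.sqrt N)⌋

/-- `𝔟^N(x,y;r,s,t) = ∏_{j=1,2} P(S_{M_j}(r/(Ns)) = S'_{M_j'}(r/(Nt)))`. -/
def bUpper (N : ℕ) (x y : ℝ × ℝ) (r s t : ℝ) : ℝ :=
  PSS (Mfl N x.1 s).toNat (Mfl N y.1 t).toNat (r / ((N : ℝ) * s)) (r / ((N : ℝ) * t)) 0 *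
  PSS (Mfl N x.2 s).toNat (Mfl N y.2 t).toNat (r / ((N : ℝ) * s)) (r / ((N : ℝ) * t)) 0

/-- `𝔟_N(x,y;r,s,t) = ∏_{j=1,2} N^{1/2} P(S_{M_j}(r/s) = S'_{M_j'}(r/t))`. -/
def bLower (N : ℕ) (x y : ℝ × ℝ) (r s t : ℝ) : ℝ :=
  (Real.sqrt N * PSS (Mfl N x.1 s).toNat (Mfl N y.1 t).toNat (r / s) (r / t) 0) *
  (Real.sqrt N * PSS (Mfl N x.2 s).toNat (Mfl N y.2 t).toNat (r / s) (r / t) 0)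

/-- The primary condition over `[T₀, T₁]` (with parameter `η ∈ (0,1/2)`). -/
def primaryCond (η T0 T1 : ℝ) (x y : ℝ × ℝ) (s t : ℝ) (N : ℕ) : Prop :=
  |x.1| ≤ (N : ℝ) ^ η / 2 ∧ |x.2| ≤ (N : ℝ) ^ η / 2 ∧
  |y.1| ≤ (N : ℝ) ^ η / 2 ∧ |y.2| ≤ (N : ℝ) ^ η / 2 ∧
  T0 ≤ s ∧ s ≤ t ∧ t ≤ T1 ∧ 16 ≤ N ∧
  1 ≤ ⌊T0 * (N : ℝ) ^ ((1 : ℝ) / 2 - η) / 2⌋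

/-- Indicator of `[1, ∞)`. -/
def ind1 (r : ℝ) : ℝ := if 1 ≤ r then 1 else 0

/-- Indicator of `(0,1)`. -/
def ind01 (u : ℝ) : ℝ := if 0 < u ∧ u < 1 then 1 else 0

/-- The error term `ε₁(y',y'';T)`. -/
def eps1 (y₁ y₂ : ℝ × ℝ) (T : ℝ) : ℝ :=
  -∫ v in Set.Ioi (T / (enorm2 y₁ y₂) ^ 2),
    (Real.exp (-(1 / (4 * v))) - ind1 v) / (4 * Real.pi * v)

/-- The error term `ε₂(y',y'';T)`. -/
def eps2 (y₁ y₂ : ℝ × ℝ) (T : ℝ) : ℝ :=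
  -(ind01 (T / (enorm2 y₁ y₂) ^ 2) * Real.log T / (4 * Real.pi))

/-- The error term `ε₃(y',y'';T)`. -/
def eps3 (y₁ y₂ : ℝ × ℝ) (T : ℝ) : ℝ :=
  ind01 (T / (enorm2 y₁ y₂) ^ 2) * Real.log (enorm2 y₁ y₂) / (2 * Real.pi)


def ff : ℝ → ℝ := fun v => (Real.exp (-(1 / (4 * v))) - ind1 v) / (4 * Real.pi * v)


lemma ind1_nonneg (v : ℝ) : 0 ≤ ind1 v := by unfold ind1; split <;> norm_num

lemma ff_bound1 {v : ℝ} (hv : v ∈ Ioc (0:ℝ) 1) : |ff v| ≤ 2 := by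
  obtain ⟨h0, h1⟩ := hv
  have hpi := Real.pi_pos
  have hden : 0 < 4 * Real.pi * v := by positivity
  have key : |ff v| ≤ Real.exp (-(1/(4*v))) / (4*Real.pi*v) + ind1 v / (4*Real.pi*v) := by
    unfold ff
    rw [abs_div, abs_of_pos hden, ← add_div]
    gcongr
    refine (abs_sub _ _).trans ?_
    rw [abs_of_nonneg (Real.exp_nonneg _), abs_of_nonneg (ind1_nonneg v)]
  refine key.trans ?_
  have t1 : Real.exp (-(1/(4*v))) / (4*Real.pi*v) ≤ 1 := by
    have hx : (0:ℝ) < 1/(4*v) := by positivity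
    have hxe : (1/(4*v)) * Real.exp (-(1/(4*v))) ≤ 1 := by
      have h := Real.add_one_le_exp (1/(4*v))
      have h2 : (1/(4*v)) * Real.exp (-(1/(4*v))) ≤ Real.exp (1/(4*v)) * Real.exp (-(1/(4*v))) :=
        mul_le_mul_of_nonneg_right (by linarith) (Real.exp_nonneg _)
      rwa [← Real.exp_add, add_neg_cancel, Real.exp_zero] at h2
    have hrw : Real.exp (-(1/(4*v))) / (4*Real.pi*v) = ((1/(4*v)) * Real.exp (-(1/(4*v)))) / Real.pi := by
      field_simp
    rw [hrw, div_le_one hpi]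
    exact hxe.trans (by linarith [Real.pi_gt_three])
  have t2 : ind1 v / (4*Real.pi*v) ≤ 1 := by
    unfold ind1
    by_cases h : 1 ≤ v
    · simp only [h, if_true]
      rw [div_le_one hden]
      nlinarith [Real.pi_gt_three]
    · simp only [h, if_false, zero_div]
      norm_num
  linarith

lemma ff_bound2 {v : ℝ} (hv : v ∈ Ioi (1:ℝ)) : |ff v| ≤ v ^ (-2 : ℝ) := by
  have h1 : (1:ℝ) < v := hv
  have h0 : (0:ℝ) < v := by linarith
  have hpi := Real.pi_pos
  have hind : ind1 v = 1 := by unfold ind1; simp [le_of_lt h1]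
  have hx : (0:ℝ) < 1/(4*v) := by positivity
  have hlow : 1 - 1/(4*v) ≤ Real.exp (-(1/(4*v))) := by
    have := Real.add_one_le_exp (-(1/(4*v))); linarith
  have hexp : Real.exp (-(1/(4*v))) ≤ 1 := Real.exp_le_one_iff.2 (by linarith)
  have hrpow : v ^ (-2:ℝ) = (v^2)⁻¹ := by
    rw [show (-2:ℝ) = ((-2:ℤ):ℝ) by norm_num, Real.rpow_intCast, zpow_neg, zpow_two, sq]
  rw [hrpow]
  unfold ff
  rw [hind, abs_div, abs_of_nonneg (by positivity : (0:ℝ) ≤ 4*Real.pi*v),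
    abs_of_nonpos (by linarith : Real.exp (-(1/(4*v))) - 1 ≤ 0)]
  rw [div_le_iff₀ (by positivity)]
  have step : -(Real.exp (-(1/(4*v))) - 1) ≤ 1/(4*v) := by linarith
  refine step.trans ?_
  rw [div_le_iff₀ (by positivity)]
  have hq : (v^2)⁻¹ * (4*Real.pi*v) * (4*v) = 16*Real.pi := by field_simp; ring
  rw [hq]; linarith [Real.pi_gt_three]

lemma measurable_ff : Measurable ff := by
  unfold ff
  have hm : Measurable fun v : ℝ => 4 * Real.pi * v := measurable_const.mul measurable_id
  have h1 : Measurable fun v : ℝ => Real.exp (-(1 / (4 * v))) :=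
    Real.measurable_exp.comp (((measurable_const.mul measurable_id : Measurable fun v:ℝ => 4*v).inv.const_mul 1).neg)
  have hi : Measurable ind1 := Measurable.ite measurableSet_Ici measurable_const measurable_const
  simp only [div_eq_mul_inv]
  exact (h1.sub hi).mul hm.inv

lemma ff_integrableOn : IntegrableOn ff (Ioi (0:ℝ)) := by
  have h01 : IntegrableOn ff (Ioc (0:ℝ) 1) := by
    refine Integrable.mono' (integrable_const 2) measurable_ff.aestronglyMeasurable.restrict ?_
    exact (ae_restrict_iff' measurableSet_Ioc).2 (Eventually.of_forall fun v hv => ff_bound1 hv)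
  have h1i : IntegrableOn ff (Ioi (1:ℝ)) := by
    refine Integrable.mono' (integrableOn_Ioi_rpow_of_lt (by norm_num : (-2:ℝ) < -1) one_pos)
      measurable_ff.aestronglyMeasurable.restrict ?_
    exact (ae_restrict_iff' measurableSet_Ioi).2 (Eventually.of_forall fun v hv => ff_bound2 hv)
  rw [show Ioi (0:ℝ) = Ioc 0 1 ∪ Ioi 1 from (Ioc_union_Ioi_eq_Ioi zero_le_one).symm]
  exact h01.union h1i


lemma ff_integrableOn_tail {a : ℝ} (ha : 0 ≤ a) : IntegrableOn ff (Ioi a) :=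
  ff_integrableOn.mono_set (Ioi_subset_Ioi ha)

lemma ff_split {R : ℝ} (hR : 0 ≤ R) :
    (∫ v in Ioi (0:ℝ), ff v) = (∫ v in Ioc (0:ℝ) R, ff v) + ∫ v in Ioi R, ff v := by
  rw [← setIntegral_union Ioc_disjoint_Ioi_same measurableSet_Ioi
    (ff_integrableOn.mono_set Ioc_subset_Ioi_self) (ff_integrableOn_tail hR),
    Ioc_union_Ioi_eq_Ioi hR]

lemma tail_tendsto : Tendsto (fun R : ℝ => ∫ v in Ioi R, ff v) atTop (nhds 0) := by
  have h := intervalIntegral_tendsto_integral_Ioi 0 ff_integrableOn tendsto_id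
  have h2 : Tendsto (fun R : ℝ => (∫ v in Ioi (0:ℝ), ff v) - ∫ v in (0:ℝ)..R, ff v)
      atTop (nhds 0) := by
    simpa using ((tendsto_const_nhds (x := ∫ v in Ioi (0:ℝ), ff v) (f := atTop))).sub h
  refine h2.congr' ?_
  filter_upwards [eventually_ge_atTop (0:ℝ)] with R hR
  rw [intervalIntegral.integral_of_le hR, ff_split hR]
  ring

lemma tail_bound {R : ℝ} (hR : 0 ≤ R) :
    |∫ v in Ioi R, ff v| ≤ ∫ v in Ioi (0:ℝ), |ff v| := by
  have := norm_integral_le_integral_norm (μ := volume.restrict (Ioi R)) ff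
  simp only [Real.norm_eq_abs] at this
  refine this.trans ?_
  refine setIntegral_mono_set ff_integrableOn.abs ?_ ?_
  · exact Eventually.of_forall fun v => abs_nonneg _
  · exact HasSubset.Subset.eventuallyLE (Ioi_subset_Ioi hR)


lemma meas_tail : Measurable fun R : ℝ => ∫ v in Ioi (max R 0), ff v := by
  set fp : ℝ → ℝ := fun v => max (ff v) 0 with hfp
  set fn : ℝ → ℝ := fun v => max (-ff v) 0 with hfn
  have hip : IntegrableOn fp (Ioi (0:ℝ)) := ff_integrableOn.pos_part
  have hin : IntegrableOn fn (Ioi (0:ℝ)) := ff_integrableOn.neg.pos_part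
  have hdecomp : ∀ R : ℝ, (∫ v in Ioi (max R 0), ff v)
      = (∫ v in Ioi (max R 0), fp v) - ∫ v in Ioi (max R 0), fn v := by
    intro R
    have hsub : Ioi (max R 0) ⊆ Ioi 0 := Ioi_subset_Ioi (le_max_right R 0)
    rw [← integral_sub (hip.mono_set hsub) (hin.mono_set hsub)]
    refine integral_congr_ae (Eventually.of_forall fun v => ?_)
    simp [hfp, hfn, max_zero_sub_max_neg_zero_eq_self]
  have key : ∀ g : ℝ → ℝ, IntegrableOn g (Ioi (0:ℝ)) → (∀ v, 0 ≤ g v) →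
      Measurable fun R : ℝ => ∫ v in Ioi (max R 0), g v := by
    intro g hg hg0
    refine Antitone.measurable fun R1 R2 h12 => ?_
    refine setIntegral_mono_set (hg.mono_set (Ioi_subset_Ioi (le_max_right R1 0)))
      (Eventually.of_forall fun v => hg0 v) ?_
    exact HasSubset.Subset.eventuallyLE (Ioi_subset_Ioi (max_le_max h12 le_rfl))
  simp only [hdecomp]
  exact (key fp hip fun v => le_max_right _ _).sub (key fn hin fun v => le_max_right _ _)



lemma enorm2_pos {y₁ y₂ : ℝ × ℝ} (hne : y₁ ≠ y₂) : 0 < enorm2 y₁ y₂ := by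
  unfold enorm2
  have h : y₁.1 ≠ y₂.1 ∨ y₁.2 ≠ y₂.2 := by
    by_contra h; push_neg at h
    exact hne (Prod.ext h.1 h.2)
  apply Real.sqrt_pos.2
  rcases h with h | h
  · have h1 : 0 < (y₁.1 - y₂.1)^2 := by have hz := sub_ne_zero.2 h; positivity
    nlinarith [sq_nonneg (y₁.2 - y₂.2)]
  · have h1 : 0 < (y₁.2 - y₂.2)^2 := by have hz := sub_ne_zero.2 h; positivity
    nlinarith [sq_nonneg (y₁.1 - y₂.1)]

lemma part1 (y₁ y₂ : ℝ × ℝ) (hne : y₁ ≠ y₂) (T : ℝ) (hT : 0 < T) :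
    (∫ r in (0:ℝ)..T, heatK (2 * r) y₁ y₂) =
      (∫ v in Set.Ioi (0:ℝ), (Real.exp (-(1 / (4 * v))) - ind1 v) / (4 * Real.pi * v)) -
        (1 / (2 * Real.pi)) * Real.log (enorm2 y₁ y₂) + Real.log T / (4 * Real.pi) +
        eps1 y₁ y₂ T + eps2 y₁ y₂ T + eps3 y₁ y₂ T := by
  have hpi := Real.pi_pos
  set d := enorm2 y₁ y₂ with hd
  have hdpos : 0 < d := enorm2_pos hne
  set c := d ^ 2 with hcdef
  have hcpos : 0 < c := by positivity
  have hc : c = (y₁.1 - y₂.1) ^ 2 + (y₁.2 - y₂.2) ^ 2 := by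
    rw [hcdef, hd]; unfold enorm2
    rw [Real.sq_sqrt (by positivity)]
  set U := T / c with hU
  have hUpos : 0 < U := div_pos hT hcpos
  -- step 1 : pointwise identity
  have step1 : ∀ r : ℝ, heatK (2 * r) y₁ y₂
      = c⁻¹ * (Real.exp (-(1 / (4 * (r / c)))) / (4 * Real.pi * (r / c))) := by
    intro r
    unfold heatK
    rw [← hc]
    by_cases hr : r = 0
    · simp [hr, div_zero, mul_zero]
    · have h1 : (1:ℝ) / (4 * (r / c)) = c / (4 * r) := by
        field_simp
      have h2 : -c / (2 * (2 * r)) = -(c / (4 * r)) := by ring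
      rw [h1, h2]
      field_simp
      ring
  -- step 2 : substitution
  have step2 : (∫ r in (0:ℝ)..T, heatK (2 * r) y₁ y₂)
      = ∫ v in (0:ℝ)..U, Real.exp (-(1 / (4 * v))) / (4 * Real.pi * v) := by
    rw [intervalIntegral.integral_congr (g := fun r =>
        c⁻¹ * (Real.exp (-(1 / (4 * (r / c)))) / (4 * Real.pi * (r / c))))
        (fun r _ => step1 r)]
    rw [intervalIntegral.integral_const_mul]
    rw [intervalIntegral.integral_comp_div
      (f := fun v => Real.exp (-(1 / (4 * v))) / (4 * Real.pi * v)) hcpos.ne']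
    rw [smul_eq_mul, zero_div, ← mul_assoc, inv_mul_cancel₀ hcpos.ne', one_mul, hU]
  rw [step2]
  -- step 3 : split off the indicator part
  have hff_Ioc : IntegrableOn ff (Ioc (0:ℝ) U) :=
    ff_integrableOn.mono_set Ioc_subset_Ioi_self
  have hhh_meas : Measurable (fun v : ℝ => ind1 v / (4 * Real.pi * v)) := by
    have hi : Measurable ind1 := Measurable.ite measurableSet_Ici measurable_const measurable_const
    have hm : Measurable fun v : ℝ => 4 * Real.pi * v := measurable_const.mul measurable_id
    simp only [div_eq_mul_inv]
    exact hi.mul hm.inv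
  have hhh_Ioc : IntegrableOn (fun v : ℝ => ind1 v / (4 * Real.pi * v)) (Ioc (0:ℝ) U) := by
    refine Integrable.mono' (integrable_const 1) hhh_meas.aestronglyMeasurable.restrict ?_
    refine (ae_restrict_iff' measurableSet_Ioc).2 (Eventually.of_forall fun v hv => ?_)
    obtain ⟨h0, _⟩ := hv
    unfold ind1
    by_cases h : 1 ≤ v
    · simp only [h, if_true]
      rw [Real.norm_eq_abs, abs_of_nonneg (by positivity)]
      rw [div_le_one (by positivity)]
      nlinarith [Real.pi_gt_three]
    · simp only [h, if_false, zero_div, norm_zero]; norm_num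
  have step3 : (∫ v in (0:ℝ)..U, Real.exp (-(1 / (4 * v))) / (4 * Real.pi * v))
      = (∫ v in Ioc (0:ℝ) U, ff v) + ∫ v in Ioc (0:ℝ) U, ind1 v / (4 * Real.pi * v) := by
    rw [intervalIntegral.integral_of_le hUpos.le, ← integral_add hff_Ioc hhh_Ioc]
    refine setIntegral_congr_ae measurableSet_Ioc (Eventually.of_forall fun v _ => ?_)
    unfold ff
    rw [← add_div, sub_add_cancel]
  rw [step3]
  -- step 4 : the tail decomposition
  have step4 : (∫ v in Ioc (0:ℝ) U, ff v) = (∫ v in Ioi (0:ℝ), ff v) - ∫ v in Ioi U, ff v := by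
    rw [ff_split hUpos.le]; ring
  rw [step4]
  -- step 5 : compute the indicator integral
  have hindrw : (fun v : ℝ => ind1 v / (4 * Real.pi * v))
      = (Ici (1:ℝ)).indicator (fun v => 1 / (4 * Real.pi * v)) := by
    funext v
    unfold ind1
    by_cases h : 1 ≤ v
    · simp [h, indicator_of_mem (mem_Ici.2 h)]
    · simp [h, indicator_of_notMem (fun hv => h (mem_Ici.1 hv))]
  have step5 : (∫ v in Ioc (0:ℝ) U, ind1 v / (4 * Real.pi * v))
      = if 1 ≤ U then Real.log U / (4 * Real.pi) else 0 := by
    rw [hindrw, setIntegral_indicator measurableSet_Ici]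
    by_cases h : 1 ≤ U
    · have hset : Ioc (0:ℝ) U ∩ Ici 1 = Icc 1 U := by
        ext v; simp only [mem_inter_iff, mem_Ioc, mem_Ici, mem_Icc]
        constructor
        · rintro ⟨⟨_, h2⟩, h3⟩; exact ⟨h3, h2⟩
        · rintro ⟨h1, h2⟩; exact ⟨⟨by linarith, h2⟩, h1⟩
      rw [hset, if_pos h, integral_Icc_eq_integral_Ioc,
        ← intervalIntegral.integral_of_le h]
      have : ∀ v : ℝ, 1 / (4 * Real.pi * v) = (4 * Real.pi)⁻¹ * v⁻¹ := by
        intro v; field_simp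
      simp only [this]
      rw [intervalIntegral.integral_const_mul, integral_inv (by
        rw [uIcc_of_le h]
        intro hmem
        exact absurd (mem_Icc.1 hmem).1 (by norm_num))]
      rw [div_one]
      field_simp
    · have hset : Ioc (0:ℝ) U ∩ Ici 1 = ∅ := by
        ext v; simp only [mem_inter_iff, mem_Ioc, mem_Ici, mem_empty_iff_false, iff_false]
        rintro ⟨⟨_, h2⟩, h3⟩
        exact h (le_trans h3 h2)
      rw [hset, if_neg h]
      simp
  rw [step5]
  -- step 6 : final algebra
  have heps1 : eps1 y₁ y₂ T = -∫ v in Ioi U, ff v := rfl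
  have hgoal_int : (∫ v in Set.Ioi (0:ℝ),
      (Real.exp (-(1 / (4 * v))) - ind1 v) / (4 * Real.pi * v)) = ∫ v in Ioi (0:ℝ), ff v := rfl
  rw [hgoal_int, heps1]
  unfold eps2 eps3
  rw [← hd, ← hcdef, ← hU]
  by_cases h : 1 ≤ U
  · have hind : ind01 U = 0 := by
      unfold ind01
      simp only [ite_eq_right_iff]
      rintro ⟨_, h2⟩; linarith
    rw [if_pos h, hind]
    have hlogU : Real.log U = Real.log T - 2 * Real.log d := by
      rw [hU, Real.log_div hT.ne' hcpos.ne', hcdef, Real.log_pow]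
      push_cast; ring
    rw [hlogU]
    field_simp
    ring
  · have hind : ind01 U = 1 := by
      unfold ind01
      rw [if_pos ⟨hUpos, lt_of_not_ge h⟩]
    rw [if_neg h, hind]
    field_simp
    ring


lemma heatK_nonneg {t : ℝ} (ht : 0 < t) (a b : ℝ × ℝ) : 0 ≤ heatK t a b := by
  unfold heatK
  have := Real.pi_pos
  positivity

lemma gauss1d_integrable {c : ℝ} (hc : 0 < c) (a : ℝ) :
    Integrable (fun u : ℝ => Real.exp (-(u - a)^2 / (2*c))) := by
  have h : Integrable (fun u : ℝ => Real.exp (-(2*c)⁻¹ * u^2)) :=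
    integrable_exp_neg_mul_sq (by positivity)
  have h2 := (measurePreserving_sub_right volume a).integrable_comp
    h.aestronglyMeasurable |>.2 h
  refine h2.congr (Eventually.of_forall fun u => ?_)
  simp only [Function.comp]
  congr 1
  field_simp
lemma gauss1d_abs_integrable {c : ℝ} (hc : 0 < c) (a : ℝ) :
    Integrable (fun u : ℝ => |u| * Real.exp (-(u - a)^2 / (2*c))) := by
  have habs : Integrable (fun u : ℝ => |u| * Real.exp (-(2*c)⁻¹ * u^2)) := by
    have h := (integrable_mul_exp_neg_mul_sq (b := (2*c)⁻¹) (by positivity)).abs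
    refine h.congr (Eventually.of_forall fun u => ?_)
    simp [abs_mul, abs_of_nonneg (Real.exp_nonneg _)]
  have hsum : Integrable (fun u : ℝ => (|u| + |a|) * Real.exp (-(2*c)⁻¹ * u^2)) := by
    have := habs.add ((integrable_exp_neg_mul_sq (b := (2*c)⁻¹) (by positivity)).const_mul |a|)
    refine this.congr (Eventually.of_forall fun u => ?_)
    simp only [Pi.add_apply]
    ring
  have h2 := (measurePreserving_sub_right volume a).integrable_comp
    hsum.aestronglyMeasurable |>.2 hsum
  refine Integrable.mono' (h2.congr (Eventually.of_forall fun u => rfl)) ?_ ?_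
  · apply Measurable.aestronglyMeasurable
    apply Measurable.mul
    · exact measurable_id.abs
    · exact Real.measurable_exp.comp ((measurable_id.sub measurable_const).pow_const 2 |>.neg.div_const _)
  · refine Eventually.of_forall fun u => ?_
    simp only [Function.comp, Real.norm_eq_abs, abs_mul, abs_abs]
    rw [abs_of_nonneg (Real.exp_nonneg _)]
    have h3 : Real.exp (-(u-a)^2/(2*c)) = Real.exp (-(2*c)⁻¹ * (u-a)^2) := by
      congr 1; field_simp
    rw [h3]
    have h4 : |u| ≤ |u - a| + |a| := by
      calc |u| = |(u - a) + a| := by ring_nf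
      _ ≤ |u - a| + |a| := abs_add_le _ _
    exact mul_le_mul_of_nonneg_right h4 (Real.exp_nonneg _)

lemma heatK_eq_prod {c : ℝ} (z : ℝ × ℝ) (w : ℝ × ℝ) :
    heatK c w z = ((2 * Real.pi * c)⁻¹ * Real.exp (-(w.1 - z.1)^2 / (2*c)))
      * Real.exp (-(w.2 - z.2)^2 / (2*c)) := by
  unfold heatK
  have h : -((w.1 - z.1) ^ 2 + (w.2 - z.2) ^ 2) / (2 * c)
      = -(w.1 - z.1)^2 / (2*c) + -(w.2 - z.2)^2 / (2*c) := by ring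
  rw [h, Real.exp_add]; ring

lemma heatK_integrable {c : ℝ} (hc : 0 < c) (z : ℝ × ℝ) :
    Integrable (fun w : ℝ × ℝ => heatK c w z) := by
  have h1 : Integrable (fun u : ℝ => (2 * Real.pi * c)⁻¹ * Real.exp (-(u - z.1)^2 / (2*c))) :=
    (gauss1d_integrable hc z.1).const_mul _
  have h2 := gauss1d_integrable hc z.2
  have := h1.mul_prod h2
  rw [← Measure.volume_eq_prod] at this
  exact this.congr (Eventually.of_forall fun w => (heatK_eq_prod z w).symm)

lemma heatK_abs_fst_integrable {c : ℝ} (hc : 0 < c) (z : ℝ × ℝ) :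
    Integrable (fun w : ℝ × ℝ => |w.1| * heatK c w z) := by
  have h1 : Integrable (fun u : ℝ => |u| * ((2 * Real.pi * c)⁻¹ * Real.exp (-(u - z.1)^2 / (2*c)))) := by
    have := (gauss1d_abs_integrable hc z.1).const_mul ((2 * Real.pi * c)⁻¹)
    exact this.congr (Eventually.of_forall fun u => by ring)
  have h2 := gauss1d_integrable hc z.2
  have := h1.mul_prod h2
  rw [← Measure.volume_eq_prod] at this
  refine this.congr (Eventually.of_forall fun w => ?_)
  simp only [heatK_eq_prod z w]; ring

lemma heatK_abs_snd_integrable {c : ℝ} (hc : 0 < c) (z : ℝ × ℝ) :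
    Integrable (fun w : ℝ × ℝ => |w.2| * heatK c w z) := by
  have h1 : Integrable (fun u : ℝ => (2 * Real.pi * c)⁻¹ * Real.exp (-(u - z.1)^2 / (2*c))) :=
    (gauss1d_integrable hc z.1).const_mul _
  have h2 := gauss1d_abs_integrable hc z.2
  have := h1.mul_prod h2
  rw [← Measure.volume_eq_prod] at this
  refine this.congr (Eventually.of_forall fun w => ?_)
  simp only [heatK_eq_prod z w]; ring



lemma heatK_continuous (c : ℝ) (z : ℝ × ℝ) : Continuous (fun w : ℝ × ℝ => heatK c w z) := by
  unfold heatK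
  have h1 : Continuous fun w : ℝ × ℝ => (w.1 - z.1) ^ 2 + (w.2 - z.2) ^ 2 := by
    apply Continuous.add
    · exact (continuous_fst.sub continuous_const).pow 2
    · exact (continuous_snd.sub continuous_const).pow 2
  exact continuous_const.mul ((h1.neg.div_const _).rexp)

lemma enorm2_nonneg (a b : ℝ × ℝ) : 0 ≤ enorm2 a b := Real.sqrt_nonneg _

lemma enorm2_le (a b : ℝ × ℝ) : enorm2 a b ≤ |a.1| + |a.2| + |b.1| + |b.2| := by
  unfold enorm2
  have h1 : (a.1 - b.1) ^ 2 + (a.2 - b.2) ^ 2 ≤ (|a.1 - b.1| + |a.2 - b.2|) ^ 2 := by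
    have := abs_nonneg (a.1 - b.1); have := abs_nonneg (a.2 - b.2)
    nlinarith [sq_abs (a.1 - b.1), sq_abs (a.2 - b.2)]
  refine (Real.sqrt_le_sqrt h1).trans ?_
  rw [Real.sqrt_sq (by positivity)]
  have h2 : |a.1 - b.1| ≤ |a.1| + |b.1| := abs_sub _ _
  have h3 : |a.2 - b.2| ≤ |a.2| + |b.2| := abs_sub _ _
  linarith

lemma key (e : (ℝ×ℝ) → (ℝ×ℝ) → ℝ → ℝ) (C : ℝ) (hC : 0 ≤ C)
    (hme : ∀ T : ℝ, 1 ≤ T → Measurable fun p : (ℝ×ℝ)×(ℝ×ℝ) => e p.1 p.2 T)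
    (hb : ∀ (y₁ y₂ : ℝ×ℝ) (T : ℝ), 1 ≤ T → |e y₁ y₂ T| ≤ C * (1 + enorm2 y₁ y₂))
    (hlim : ∀ y₁ y₂ : ℝ×ℝ, y₁ ≠ y₂ → Tendsto (fun T => e y₁ y₂ T) atTop (nhds 0))
    (x y : ℝ×ℝ) (s t : ℝ) (hs : 0 < s) (hst : s ≤ t) :
    Tendsto (fun T : ℝ => ∫ y₁ : ℝ × ℝ, ∫ y₂ : ℝ × ℝ,
      heatK (1/s) y₁ x * |e y₁ y₂ T| * heatK (1/t) y₂ y) atTop (nhds 0) := by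
  have ht : 0 < t := lt_of_lt_of_le hs hst
  have hcs : 0 < 1/s := by positivity
  have hct : 0 < 1/t := by positivity
  set Q1 : (ℝ×ℝ) → ℝ := fun y₁ => heatK (1/s) y₁ x with hQ1
  set Q2 : (ℝ×ℝ) → ℝ := fun y₂ => heatK (1/t) y₂ y with hQ2
  have hQ1nn : ∀ y₁, 0 ≤ Q1 y₁ := fun y₁ => heatK_nonneg hcs y₁ x
  have hQ2nn : ∀ y₂, 0 ≤ Q2 y₂ := fun y₂ => heatK_nonneg hct y₂ y
  have hQ2int : Integrable Q2 := heatK_integrable hct y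
  have hQ2abs1 : Integrable (fun y₂ : ℝ×ℝ => |y₂.1| * Q2 y₂) := heatK_abs_fst_integrable hct y
  have hQ2abs2 : Integrable (fun y₂ : ℝ×ℝ => |y₂.2| * Q2 y₂) := heatK_abs_snd_integrable hct y
  have hQ1int : Integrable Q1 := heatK_integrable hcs x
  have hQ1abs1 : Integrable (fun y₁ : ℝ×ℝ => |y₁.1| * Q1 y₁) := heatK_abs_fst_integrable hcs x
  have hQ1abs2 : Integrable (fun y₁ : ℝ×ℝ => |y₁.2| * Q1 y₁) := heatK_abs_snd_integrable hcs x
  -- the dominating function at the inner level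
  set bound2 : (ℝ×ℝ) → (ℝ×ℝ) → ℝ := fun y₁ y₂ =>
    (Q1 y₁ * C) * ((1 + |y₁.1| + |y₁.2|) * Q2 y₂ + |y₂.1| * Q2 y₂ + |y₂.2| * Q2 y₂) with hbound2
  have hbound2_int : ∀ y₁, Integrable (bound2 y₁) := by
    intro y₁
    exact (((hQ2int.const_mul _).add hQ2abs1).add hQ2abs2).const_mul _
  have hpt : ∀ (y₁ y₂ : ℝ×ℝ) (T : ℝ), 1 ≤ T →
      Q1 y₁ * |e y₁ y₂ T| * Q2 y₂ ≤ bound2 y₁ y₂ := by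
    intro y₁ y₂ T hT
    have h1 : |e y₁ y₂ T| ≤ C * (1 + |y₁.1| + |y₁.2| + |y₂.1| + |y₂.2|) := by
      refine (hb y₁ y₂ T hT).trans ?_
      have := enorm2_le y₁ y₂
      nlinarith [enorm2_nonneg y₁ y₂]
    calc Q1 y₁ * |e y₁ y₂ T| * Q2 y₂
        ≤ Q1 y₁ * (C * (1 + |y₁.1| + |y₁.2| + |y₂.1| + |y₂.2|)) * Q2 y₂ := by
          have := hQ1nn y₁; have := hQ2nn y₂
          gcongr
      _ = bound2 y₁ y₂ := by rw [hbound2]; ring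
  -- value of the integral of the dominating function
  set J0 := ∫ y₂ : ℝ×ℝ, Q2 y₂ with hJ0
  set J1 := ∫ y₂ : ℝ×ℝ, |y₂.1| * Q2 y₂ with hJ1
  set J2 := ∫ y₂ : ℝ×ℝ, |y₂.2| * Q2 y₂ with hJ2
  have hBval : ∀ y₁, (∫ y₂ : ℝ×ℝ, bound2 y₁ y₂)
      = (Q1 y₁ * C) * ((1 + |y₁.1| + |y₁.2|) * J0 + J1 + J2) := by
    intro y₁
    rw [show (fun y₂ : ℝ×ℝ => bound2 y₁ y₂) = (fun y₂ : ℝ×ℝ => (Q1 y₁ * C) *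
        ((1 + |y₁.1| + |y₁.2|) * Q2 y₂ + |y₂.1| * Q2 y₂ + |y₂.2| * Q2 y₂)) from rfl]
    rw [integral_const_mul]
    rw [integral_add (f := fun y₂ : ℝ×ℝ => (1 + |y₁.1| + |y₁.2|) * Q2 y₂ + |y₂.1| * Q2 y₂)
      (g := fun y₂ : ℝ×ℝ => |y₂.2| * Q2 y₂) ((hQ2int.const_mul _).add hQ2abs1) hQ2abs2,
      integral_add (f := fun y₂ : ℝ×ℝ => (1 + |y₁.1| + |y₁.2|) * Q2 y₂)
      (g := fun y₂ : ℝ×ℝ => |y₂.1| * Q2 y₂) (hQ2int.const_mul _) hQ2abs1, integral_const_mul]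
  set B : (ℝ×ℝ) → ℝ := fun y₁ => (Q1 y₁ * C) * ((1 + |y₁.1| + |y₁.2|) * J0 + J1 + J2) with hB
  have hBint : Integrable B := by
    have : Integrable (fun y₁ : ℝ×ℝ => (C * (J0 + J1 + J2)) * Q1 y₁
        + (C * J0) * (|y₁.1| * Q1 y₁) + (C * J0) * (|y₁.2| * Q1 y₁)) :=
      ((hQ1int.const_mul _).add (hQ1abs1.const_mul _)).add (hQ1abs2.const_mul _)
    refine this.congr (Eventually.of_forall fun y₁ => ?_)
    rw [hB]; ring
  -- joint measurability
  have hjoint : ∀ T : ℝ, 1 ≤ T → Measurable fun p : (ℝ×ℝ)×(ℝ×ℝ) =>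
      Q1 p.1 * |e p.1 p.2 T| * Q2 p.2 := by
    intro T hT
    have h1 : Measurable fun p : (ℝ×ℝ)×(ℝ×ℝ) => Q1 p.1 :=
      ((heatK_continuous (1/s) x).measurable).comp measurable_fst
    have h2 : Measurable fun p : (ℝ×ℝ)×(ℝ×ℝ) => Q2 p.2 :=
      ((heatK_continuous (1/t) y).measurable).comp measurable_snd
    exact (h1.mul (hme T hT).abs).mul h2
  -- a.e. different
  have haediff : ∀ y₁ : ℝ×ℝ, ∀ᵐ y₂ : ℝ×ℝ, y₂ ≠ y₁ := by
    intro y₁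
    have hsing : (volume : Measure (ℝ×ℝ)) {y₁} = 0 := by
      rw [Measure.volume_eq_prod]
      exact measure_singleton _
    rw [ae_iff]
    convert hsing using 2
    ext y₂; simp [not_not]
  -- inner convergence
  have hinner : ∀ y₁ : ℝ×ℝ, Tendsto (fun T : ℝ =>
      ∫ y₂ : ℝ×ℝ, Q1 y₁ * |e y₁ y₂ T| * Q2 y₂) atTop (nhds 0) := by
    intro y₁
    have h := tendsto_integral_filter_of_dominated_convergence (μ := volume)
      (F := fun T (y₂ : ℝ×ℝ) => Q1 y₁ * |e y₁ y₂ T| * Q2 y₂) (f := fun _ => (0:ℝ))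
      (bound := bound2 y₁)
      (by
        filter_upwards [eventually_ge_atTop (1:ℝ)] with T hT
        exact (((hjoint T hT).comp (measurable_prodMk_left)).aestronglyMeasurable))
      (by
        filter_upwards [eventually_ge_atTop (1:ℝ)] with T hT
        refine Eventually.of_forall fun y₂ => ?_
        rw [Real.norm_eq_abs, abs_of_nonneg (mul_nonneg (mul_nonneg (hQ1nn y₁)
          (abs_nonneg _)) (hQ2nn y₂))]
        exact hpt y₁ y₂ T hT)
      (hbound2_int y₁)
      (by
        filter_upwards [haediff y₁] with y₂ hne
        have h0 := hlim y₁ y₂ (Ne.symm hne)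
        have := ((h0.abs).const_mul (Q1 y₁)).mul_const (Q2 y₂)
        simpa using this)
    simpa using h
  -- outer convergence
  have h := tendsto_integral_filter_of_dominated_convergence (μ := volume)
    (F := fun T (y₁ : ℝ×ℝ) => ∫ y₂ : ℝ×ℝ, Q1 y₁ * |e y₁ y₂ T| * Q2 y₂)
    (f := fun _ => (0:ℝ)) (bound := B)
    (by
      filter_upwards [eventually_ge_atTop (1:ℝ)] with T hT
      exact ((hjoint T hT).stronglyMeasurable.integral_prod_right').aestronglyMeasurable)
    (by
      filter_upwards [eventually_ge_atTop (1:ℝ)] with T hT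
      refine Eventually.of_forall fun y₁ => ?_
      have hnn : 0 ≤ ∫ y₂ : ℝ×ℝ, Q1 y₁ * |e y₁ y₂ T| * Q2 y₂ :=
        integral_nonneg fun y₂ => mul_nonneg (mul_nonneg (hQ1nn y₁) (abs_nonneg _)) (hQ2nn y₂)
      rw [Real.norm_eq_abs, abs_of_nonneg hnn]
      refine (integral_mono_of_nonneg (Eventually.of_forall fun y₂ =>
          mul_nonneg (mul_nonneg (hQ1nn y₁) (abs_nonneg _)) (hQ2nn y₂))
        (hbound2_int y₁) (Eventually.of_forall fun y₂ => hpt y₁ y₂ T hT)).trans ?_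
      rw [hBval y₁])
    hBint
    (Eventually.of_forall hinner)
  simpa [hQ1, hQ2] using h


lemma enorm2_continuous : Continuous fun p : (ℝ×ℝ)×(ℝ×ℝ) => enorm2 p.1 p.2 := by
  unfold enorm2
  apply Real.continuous_sqrt.comp
  apply Continuous.add
  · exact ((continuous_fst.fst.sub continuous_snd.fst)).pow 2
  · exact ((continuous_fst.snd.sub continuous_snd.snd)).pow 2

lemma measurable_u (T : ℝ) : Measurable fun p : (ℝ×ℝ)×(ℝ×ℝ) => T / (enorm2 p.1 p.2) ^ 2 := by
  simp only [div_eq_mul_inv]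
  exact measurable_const.mul ((enorm2_continuous.measurable.pow_const 2).inv)

lemma measurable_ind01 : Measurable ind01 := by
  unfold ind01
  exact Measurable.ite (by exact measurableSet_Ioo (a := (0:ℝ)) (b := 1))
    measurable_const measurable_const

lemma u_nonneg {T : ℝ} (hT : 0 ≤ T) (y₁ y₂ : ℝ × ℝ) : 0 ≤ T / (enorm2 y₁ y₂) ^ 2 :=
  div_nonneg hT (by positivity)

-- eps1 facts
lemma eps1_meas {T : ℝ} (hT : 1 ≤ T) : Measurable fun p : (ℝ×ℝ)×(ℝ×ℝ) => eps1 p.1 p.2 T := by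
  have h : (fun p : (ℝ×ℝ)×(ℝ×ℝ) => eps1 p.1 p.2 T)
      = fun p => -((fun R : ℝ => ∫ v in Ioi (max R 0), ff v) (T / (enorm2 p.1 p.2) ^ 2)) := by
    funext p
    have h0 : max (T / (enorm2 p.1 p.2) ^ 2) 0 = T / (enorm2 p.1 p.2) ^ 2 :=
      max_eq_left (u_nonneg (by linarith) _ _)
    simp only [eps1, h0]
    rfl
  rw [h]
  exact (meas_tail.comp (measurable_u T)).neg

lemma eps1_bound {T : ℝ} (hT : 1 ≤ T) (y₁ y₂ : ℝ × ℝ) :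
    |eps1 y₁ y₂ T| ≤ (∫ v in Ioi (0:ℝ), |ff v|) * (1 + enorm2 y₁ y₂) := by
  have h1 : |eps1 y₁ y₂ T| ≤ ∫ v in Ioi (0:ℝ), |ff v| := by
    rw [eps1, abs_neg]
    exact tail_bound (u_nonneg (by linarith) _ _)
  have hC : 0 ≤ ∫ v in Ioi (0:ℝ), |ff v| := integral_nonneg fun v => abs_nonneg _
  nlinarith [enorm2_nonneg y₁ y₂]

lemma eps1_lim {y₁ y₂ : ℝ × ℝ} (hne : y₁ ≠ y₂) :
    Tendsto (fun T => eps1 y₁ y₂ T) atTop (nhds 0) := by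
  have hd : 0 < (enorm2 y₁ y₂) ^ 2 := by have := enorm2_pos hne; positivity
  have hcomp : Tendsto (fun T : ℝ => T / (enorm2 y₁ y₂) ^ 2) atTop atTop :=
    tendsto_id.atTop_div_const hd
  have h := (tail_tendsto.comp hcomp).neg
  have h2 : (fun T => eps1 y₁ y₂ T) = fun T : ℝ => -∫ v in Ioi (T / enorm2 y₁ y₂ ^ 2), ff v := rfl
  rw [h2]
  simpa [Function.comp] using h

-- eps2 facts
lemma eps2_meas {T : ℝ} (hT : 1 ≤ T) : Measurable fun p : (ℝ×ℝ)×(ℝ×ℝ) => eps2 p.1 p.2 T := by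
  unfold eps2
  exact (((measurable_ind01.comp (measurable_u T)).mul_const _).div_const _).neg

lemma eps2_bound {T : ℝ} (hT : 1 ≤ T) (y₁ y₂ : ℝ × ℝ) :
    |eps2 y₁ y₂ T| ≤ (1 / (2 * Real.pi)) * (1 + enorm2 y₁ y₂) := by
  have hpi := Real.pi_pos
  have hd := enorm2_nonneg y₁ y₂
  set d := enorm2 y₁ y₂ with hdd
  set u := T / d ^ 2 with hu
  by_cases h : 0 < u ∧ u < 1
  · have hd2 : 0 < d ^ 2 := by
      rcases h with ⟨h1, _⟩
      by_contra hc
      push_neg at hc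
      have : d ^ 2 = 0 := le_antisymm hc (by positivity)
      rw [hu, this, div_zero] at h1
      exact lt_irrefl 0 h1
    have hTd : T < d ^ 2 := (div_lt_one hd2).1 h.2
    have hd1 : 1 < d := by nlinarith
    have hlogT : 0 ≤ Real.log T := Real.log_nonneg hT
    have hlog2 : Real.log T ≤ 2 * Real.log d := by
      calc Real.log T ≤ Real.log (d ^ 2) :=
        Real.log_le_log (by linarith) hTd.le
      _ = 2 * Real.log d := by rw [Real.log_pow]; push_cast; ring
    have hlogd : Real.log d ≤ d := (Real.log_le_sub_one_of_pos (by linarith)).trans (by linarith)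
    have : |eps2 y₁ y₂ T| = Real.log T / (4 * Real.pi) := by
      rw [eps2, ← hdd, ← hu]
      unfold ind01
      rw [if_pos h, abs_neg, one_mul, abs_of_nonneg (by positivity)]
    rw [this]
    rw [div_le_iff₀ (by positivity)]
    have hlogdnn : 0 ≤ Real.log d := Real.log_nonneg hd1.le
    have hrw : (1 / (2 * Real.pi)) * (1 + d) * (4 * Real.pi) = 2 * (1 + d) := by
      field_simp; ring
    rw [hrw]; linarith
  · have : eps2 y₁ y₂ T = 0 := by
      rw [eps2, ← hdd, ← hu]
      unfold ind01
      rw [if_neg h, zero_mul, zero_div, neg_zero]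
    rw [this, abs_zero]
    positivity

lemma eps2_lim {y₁ y₂ : ℝ × ℝ} (hne : y₁ ≠ y₂) :
    Tendsto (fun T => eps2 y₁ y₂ T) atTop (nhds 0) := by
  have hd : 0 < (enorm2 y₁ y₂) ^ 2 := by have := enorm2_pos hne; positivity
  refine Tendsto.congr' ?_ tendsto_const_nhds
  filter_upwards [eventually_ge_atTop ((enorm2 y₁ y₂) ^ 2)] with T hT
  rw [eps2]
  unfold ind01
  rw [if_neg, zero_mul, zero_div, neg_zero]
  rintro ⟨_, h2⟩
  rw [div_lt_one hd] at h2
  linarith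

-- eps3 facts
lemma eps3_meas {T : ℝ} (hT : 1 ≤ T) : Measurable fun p : (ℝ×ℝ)×(ℝ×ℝ) => eps3 p.1 p.2 T := by
  unfold eps3
  exact ((measurable_ind01.comp (measurable_u T)).mul
    (Real.measurable_log.comp enorm2_continuous.measurable)).div_const _

lemma eps3_bound {T : ℝ} (hT : 1 ≤ T) (y₁ y₂ : ℝ × ℝ) :
    |eps3 y₁ y₂ T| ≤ (1 / (2 * Real.pi)) * (1 + enorm2 y₁ y₂) := by
  have hpi := Real.pi_pos
  have hd := enorm2_nonneg y₁ y₂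
  set d := enorm2 y₁ y₂ with hdd
  set u := T / d ^ 2 with hu
  by_cases h : 0 < u ∧ u < 1
  · have hd2 : 0 < d ^ 2 := by
      rcases h with ⟨h1, _⟩
      by_contra hc
      push_neg at hc
      have : d ^ 2 = 0 := le_antisymm hc (by positivity)
      rw [hu, this, div_zero] at h1
      exact lt_irrefl 0 h1
    have hTd : T < d ^ 2 := (div_lt_one hd2).1 h.2
    have hd1 : 1 < d := by nlinarith
    have hlogdnn : 0 ≤ Real.log d := Real.log_nonneg hd1.le
    have hlogd : Real.log d ≤ d := (Real.log_le_sub_one_of_pos (by linarith)).trans (by linarith)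
    have : |eps3 y₁ y₂ T| = Real.log d / (2 * Real.pi) := by
      rw [eps3, ← hdd, ← hu]
      unfold ind01
      rw [if_pos h, one_mul, abs_of_nonneg (by positivity)]
    rw [this, div_le_iff₀ (by positivity)]
    have hrw : (1 / (2 * Real.pi)) * (1 + d) * (2 * Real.pi) = 1 + d := by
      field_simp
    rw [hrw]; linarith
  · have : eps3 y₁ y₂ T = 0 := by
      rw [eps3, ← hdd, ← hu]
      unfold ind01
      rw [if_neg h, zero_mul, zero_div]
    rw [this, abs_zero]
    positivity

lemma eps3_lim {y₁ y₂ : ℝ × ℝ} (hne : y₁ ≠ y₂) :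
    Tendsto (fun T => eps3 y₁ y₂ T) atTop (nhds 0) := by
  have hd : 0 < (enorm2 y₁ y₂) ^ 2 := by have := enorm2_pos hne; positivity
  refine Tendsto.congr' ?_ tendsto_const_nhds
  filter_upwards [eventually_ge_atTop ((enorm2 y₁ y₂) ^ 2)] with T hT
  rw [eps3]
  unfold ind01
  rw [if_neg, zero_mul, zero_div]
  rintro ⟨_, h2⟩
  rw [div_lt_one hd] at h2
  linarith

theorem stmt16 :
    (∀ (y₁ y₂ : ℝ × ℝ), y₁ ≠ y₂ → ∀ T : ℝ, 0 < T →
      (∫ r in (0:ℝ)..T, heatK (2 * r) y₁ y₂) =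
        (∫ v in Set.Ioi (0:ℝ), (Real.exp (-(1 / (4 * v))) - ind1 v) / (4 * Real.pi * v)) -
          (1 / (2 * Real.pi)) * Real.log (enorm2 y₁ y₂) + Real.log T / (4 * Real.pi) +
          eps1 y₁ y₂ T + eps2 y₁ y₂ T + eps3 y₁ y₂ T) ∧
    (∀ eps : (ℝ × ℝ) → (ℝ × ℝ) → ℝ → ℝ, (eps = eps1 ∨ eps = eps2 ∨ eps = eps3) →
      ∀ (x y : ℝ × ℝ) (s t : ℝ), 0 < s → s ≤ t →
        Tendsto
          (fun T : ℝ =>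
            ∫ y₁ : ℝ × ℝ, ∫ y₂ : ℝ × ℝ,
              heatK (1 / s) y₁ x * |eps y₁ y₂ T| * heatK (1 / t) y₂ y)
          atTop (nhds 0)) := by
  constructor
  · exact part1
  · intro eps heps x y s t hs hst
    have hC1 : 0 ≤ ∫ v in Ioi (0:ℝ), |ff v| := integral_nonneg fun v => abs_nonneg _
    have hCpi : 0 ≤ 1 / (2 * Real.pi) := by positivity
    rcases heps with rfl | rfl | rfl
    · exact key eps1 _ hC1 (fun T hT => eps1_meas hT) (fun y₁ y₂ T hT => eps1_bound hT y₁ y₂)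
        (fun y₁ y₂ hne => eps1_lim hne) x y s t hs hst
    · exact key eps2 _ hCpi (fun T hT => eps2_meas hT) (fun y₁ y₂ T hT => eps2_bound hT y₁ y₂)
        (fun y₁ y₂ hne => eps2_lim hne) x y s t hs hst
    · exact key eps3 _ hCpi (fun T hT => eps3_meas hT) (fun y₁ y₂ T hT => eps3_bound hT y₁ y₂)
        (fun y₁ y₂ hne => eps3_lim hne) x y s t hs hst
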